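/- arXiv:1911.11043 — 2 statements merged into one kernel-verified Lean document; each statement's English description precedes it below -/
import Mathlib

section
/- If Y = Y1* · A + Y0* · (1 − A) almost surely with A Bernoulli(1/2) independent of (Y0*, Y1*, X), then for every measurable decision rule d_β(x) = 1{xᵀβ > 0}, E[(A·1{xᵀβ>0} + (1−A)·1{xᵀβ≤0})·Y] = (1/2)·E[μ(1,X)·1{Xᵀβ>0} + μ(0,X)·1{Xᵀβ≤0}], where μ(a,x) = E[Ya*|X=x]. In particular this equals (1/2)·V(β) with V(β) = E[Y1*·d_β(X) + Y0*·(1−d_β(X))]. -/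
open MeasureTheory ProbabilityTheory

theorem stmt0 {Ω : Type*} [MeasurableSpace Ω] (P : Measure Ω) [IsProbabilityMeasure P]
    {p : ℕ} (Y0 Y1 : Ω → ℝ) (X : Ω → (Fin p → ℝ)) (A Y : Ω → ℝ)
    (hY0 : Integrable Y0 P) (hY1 : Integrable Y1 P)
    (hA01 : ∀ ω, A ω = 0 ∨ A ω = 1)
    (hAmeas : Measurable A) (hXmeas : Measurable X)
    (hY0meas : Measurable Y0) (hY1meas : Measurable Y1)
    (hAhalf : P {ω | A ω = 1} = 1/2)
    (hindep : IndepFun A (fun ω => (Y0 ω, Y1 ω, X ω)) P)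
    (hconsistency : ∀ᵐ ω ∂P, Y ω = Y1 ω * A ω + Y0 ω * (1 - A ω))
    (β : Fin p → ℝ) :
    (∫ ω, (A ω * (if 0 < ∑ i, X ω i * β i then (1:ℝ) else 0)
        + (1 - A ω) * (if ∑ i, X ω i * β i ≤ 0 then (1:ℝ) else 0)) * Y ω ∂P)
      = (1/2) * ∫ ω, ((P[Y1 | MeasurableSpace.comap X inferInstance]) ω
            * (if 0 < ∑ i, X ω i * β i then (1:ℝ) else 0)
          + (P[Y0 | MeasurableSpace.comap X inferInstance]) ω
            * (if ∑ i, X ω i * β i ≤ 0 then (1:ℝ) else 0)) ∂P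
    ∧ (∫ ω, (A ω * (if 0 < ∑ i, X ω i * β i then (1:ℝ) else 0)
        + (1 - A ω) * (if ∑ i, X ω i * β i ≤ 0 then (1:ℝ) else 0)) * Y ω ∂P)
      = (1/2) * ∫ ω, (Y1 ω * (if 0 < ∑ i, X ω i * β i then (1:ℝ) else 0)
          + Y0 ω * (1 - (if 0 < ∑ i, X ω i * β i then (1:ℝ) else 0))) ∂P := by
  classical
  have hm : MeasurableSpace.comap X inferInstance ≤ ‹MeasurableSpace Ω› := hXmeas.comap_le
  have hg : Measurable fun v : Fin p → ℝ => ∑ i, v i * β i :=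
    Finset.measurable_sum _ fun i _ => (measurable_pi_apply i).mul_const _
  set S : Set Ω := {ω | 0 < ∑ i, X ω i * β i} with hS_def
  have hSm : MeasurableSet[MeasurableSpace.comap X inferInstance] S :=
    ⟨{v | 0 < ∑ i, v i * β i}, measurableSet_lt measurable_const hg, rfl⟩
  have hS : MeasurableSet S := hm _ hSm
  have hScm : MeasurableSet[MeasurableSpace.comap X inferInstance] Sᶜ := hSm.compl
  have hSc : MeasurableSet Sᶜ := hS.compl
  -- indicator rewrites
  have hI1 : ∀ ω, (if 0 < ∑ i, X ω i * β i then (1:ℝ) else 0)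
      = S.indicator (fun _ => (1:ℝ)) ω := by
    intro ω; by_cases h : 0 < ∑ i, X ω i * β i <;> simp [hS_def, Set.indicator, h]
  have hI0 : ∀ ω, (if ∑ i, X ω i * β i ≤ 0 then (1:ℝ) else 0)
      = Sᶜ.indicator (fun _ => (1:ℝ)) ω := by
    intro ω; by_cases h : 0 < ∑ i, X ω i * β i <;>
      simp [hS_def, Set.indicator, h, not_lt.mp, le_of_lt, not_le.mpr]
  -- integrability
  have hint1 : Integrable (S.indicator Y1) P := hY1.indicator hS
  have hint0 : Integrable (Sᶜ.indicator Y0) P := hY0.indicator hSc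
  have hAbdd : ∃ C, ∀ ω, ‖A ω‖ ≤ C := by
    refine ⟨1, fun ω => ?_⟩
    rcases hA01 ω with h | h <;> simp [h]
  have hA1bdd : ∃ C, ∀ ω, ‖1 - A ω‖ ≤ C := by
    refine ⟨1, fun ω => ?_⟩
    rcases hA01 ω with h | h <;> simp [h]
  have hintA1 : Integrable (fun ω => A ω * S.indicator Y1 ω) P :=
    hint1.bdd_mul hAmeas.aestronglyMeasurable (Filter.Eventually.of_forall hAbdd.choose_spec)
  have hintA0 : Integrable (fun ω => (1 - A ω) * Sᶜ.indicator Y0 ω) P :=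
    hint0.bdd_mul ((measurable_const.sub hAmeas)).aestronglyMeasurable (Filter.Eventually.of_forall hA1bdd.choose_spec)
  -- Step 1: rewrite the LHS integrand a.e.
  have hLHS : (∫ ω, (A ω * (if 0 < ∑ i, X ω i * β i then (1:ℝ) else 0)
        + (1 - A ω) * (if ∑ i, X ω i * β i ≤ 0 then (1:ℝ) else 0)) * Y ω ∂P)
      = ∫ ω, (A ω * S.indicator Y1 ω + (1 - A ω) * Sᶜ.indicator Y0 ω) ∂P := by
    refine integral_congr_ae ?_
    filter_upwards [hconsistency] with ω hY
    rw [hY]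
    rcases hA01 ω with h | h <;>
      · by_cases hs : 0 < ∑ i, X ω i * β i <;>
          simp [Set.indicator, hS_def, h, hs, not_lt.mp] <;> ring
  -- independence
  have hindepA1 : IndepFun A (fun ω => S.indicator Y1 ω) P := by
    have hφ : Measurable fun q : ℝ × ℝ × (Fin p → ℝ) =>
        ({v : Fin p → ℝ | 0 < ∑ i, v i * β i}.indicator (fun _ => (1:ℝ)) q.2.2) * q.2.1 :=
      (((measurable_const.indicator
        (measurableSet_lt measurable_const hg)).comp
        (measurable_snd.comp measurable_snd)).mul (measurable_fst.comp measurable_snd))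
    have h2 := hindep.comp measurable_id hφ
    have heq : (fun ω => S.indicator Y1 ω) =
        (fun q : ℝ × ℝ × (Fin p → ℝ) =>
          ({v : Fin p → ℝ | 0 < ∑ i, v i * β i}.indicator (fun _ => (1:ℝ)) q.2.2) * q.2.1) ∘
          (fun ω => (Y0 ω, Y1 ω, X ω)) := by
      funext ω
      by_cases h : 0 < ∑ i, X ω i * β i <;>
        simp [Set.indicator, hS_def, h, Function.comp]
    rw [heq]; exact h2
  have hindepA0 : IndepFun (fun ω => 1 - A ω) (fun ω => Sᶜ.indicator Y0 ω) P := by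
    have hφ : Measurable fun q : ℝ × ℝ × (Fin p → ℝ) =>
        ({v : Fin p → ℝ | 0 < ∑ i, v i * β i}ᶜ.indicator (fun _ => (1:ℝ)) q.2.2) * q.1 :=
      (((measurable_const.indicator
        (measurableSet_lt measurable_const hg).compl).comp
        (measurable_snd.comp measurable_snd)).mul measurable_fst)
    have h2 := hindep.comp (show Measurable fun a : ℝ => 1 - a from measurable_const.sub measurable_id) hφ
    have heq : (fun ω => Sᶜ.indicator Y0 ω) =
        (fun q : ℝ × ℝ × (Fin p → ℝ) =>
          ({v : Fin p → ℝ | 0 < ∑ i, v i * β i}ᶜ.indicator (fun _ => (1:ℝ)) q.2.2) * q.1) ∘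
          (fun ω => (Y0 ω, Y1 ω, X ω)) := by
      funext ω
      by_cases h : 0 < ∑ i, X ω i * β i <;>
        simp [Set.indicator, hS_def, h, Function.comp]
    rw [heq]; exact h2
  -- expectation of A
  have hAs : MeasurableSet {ω | A ω = 1} := hAmeas (measurableSet_singleton 1)
  have h1 : A = {ω | A ω = 1}.indicator (fun _ => (1:ℝ)) := by
    funext ω
    rcases hA01 ω with h | h <;> simp [Set.indicator, h]
  have hAint : Integrable A P := by
    rw [h1]; exact (integrable_const 1).indicator hAs
  have hEA : ∫ ω, A ω ∂P = 1/2 := by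
    conv_lhs => rw [h1]
    rw [integral_indicator hAs, setIntegral_const, measureReal_def, hAhalf]
    simp [ENNReal.toReal_div]
  have hEA' : ∫ ω, (1 - A ω) ∂P = 1/2 := by
    rw [integral_sub (integrable_const 1) hAint, hEA]
    simp
    norm_num
  -- factorization
  have hfac1 : ∫ ω, A ω * S.indicator Y1 ω ∂P = (1/2) * ∫ ω, S.indicator Y1 ω ∂P := by
    have := hindepA1.integral_mul_eq_mul_integral hAmeas.aestronglyMeasurable
      hint1.aestronglyMeasurable
    rw [← hEA]
    exact this
  have hfac0 : ∫ ω, (1 - A ω) * Sᶜ.indicator Y0 ω ∂P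
      = (1/2) * ∫ ω, Sᶜ.indicator Y0 ω ∂P := by
    have := hindepA0.integral_mul_eq_mul_integral (measurable_const.sub hAmeas).aestronglyMeasurable
      hint0.aestronglyMeasurable
    rw [← hEA']
    exact this
  have hsplit : (∫ ω, (A ω * (if 0 < ∑ i, X ω i * β i then (1:ℝ) else 0)
        + (1 - A ω) * (if ∑ i, X ω i * β i ≤ 0 then (1:ℝ) else 0)) * Y ω ∂P)
      = (1/2) * (∫ ω, S.indicator Y1 ω ∂P + ∫ ω, Sᶜ.indicator Y0 ω ∂P) := by
    rw [hLHS, integral_add hintA1 hintA0, hfac1, hfac0]; ring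
  -- conditional expectation step
  have hce1 : ∫ ω, S.indicator Y1 ω ∂P
      = ∫ ω, S.indicator (P[Y1 | MeasurableSpace.comap X inferInstance]) ω ∂P := by
    rw [integral_indicator hS, integral_indicator hS, setIntegral_condExp hm hY1 hSm]
  have hce0 : ∫ ω, Sᶜ.indicator Y0 ω ∂P
      = ∫ ω, Sᶜ.indicator (P[Y0 | MeasurableSpace.comap X inferInstance]) ω ∂P := by
    rw [integral_indicator hSc, integral_indicator hSc, setIntegral_condExp hm hY0 hScm]
  constructor
  · rw [hsplit, hce1, hce0]
    congr 1
    rw [← integral_add ((integrable_condExp (m := MeasurableSpace.comap X inferInstance)).indicator hS)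
        ((integrable_condExp (m := MeasurableSpace.comap X inferInstance)).indicator hSc)]
    refine integral_congr_ae (Filter.Eventually.of_forall fun ω => ?_)
    by_cases h : 0 < ∑ i, X ω i * β i <;>
      simp [Set.indicator, hS_def, h, not_lt.mp]
  · rw [hsplit]
    congr 1
    rw [← integral_add hint1 hint0]
    refine integral_congr_ae (Filter.Eventually.of_forall fun ω => ?_)
    by_cases h : 0 < ∑ i, X ω i * β i <;>
      simp [Set.indicator, hS_def, h, not_lt.mp]
end

section
/- Let Q be a symmetric negative definite (p−1)×(p−1) real matrix with eigenvalue of smallest absolute value ω_min ≠ 0, and let (θ_n) be a sequence of random vectors in ℝ^{p−1} and (h_n) positive reals with h_n → 0 and h_n‖θ_n‖ → 0 in probability. Suppose ‖Qθ_n‖ ≤ ε_n + α₁h_n‖θ_n‖ + α₂h_n‖θ_n‖² where ε_n → 0 in probability and α₁, α₂ are fixed finite constants. Then ‖θ_n‖ → 0 in probability. -/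
open MeasureTheory RealInnerProductSpace

theorem stmt14 {Ω : Type*} [MeasurableSpace Ω] (ℙ : Measure Ω) [IsProbabilityMeasure ℙ]
    {m : ℕ} (Q : EuclideanSpace ℝ (Fin m) →ₗ[ℝ] EuclideanSpace ℝ (Fin m))
    (hsym : ∀ u v : EuclideanSpace ℝ (Fin m), ⟪Q u, v⟫ = ⟪u, Q v⟫)
    (hneg : ∀ v : EuclideanSpace ℝ (Fin m), v ≠ 0 → ⟪Q v, v⟫ < 0)
    (θ : ℕ → Ω → EuclideanSpace ℝ (Fin m)) (εn : ℕ → Ω → ℝ) (h : ℕ → ℝ) (α₁ α₂ : ℝ)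
    (hpos : ∀ n, 0 < h n)
    (hh : Filter.Tendsto h Filter.atTop (nhds 0))
    (hεconv : ∀ δ : ℝ, 0 < δ →
      Filter.Tendsto (fun n => ℙ {ω | δ < |εn n ω|}) Filter.atTop (nhds 0))
    (hθh : ∀ δ : ℝ, 0 < δ →
      Filter.Tendsto (fun n => ℙ {ω | δ < h n * ‖θ n ω‖}) Filter.atTop (nhds 0))
    (hbound : ∀ n ω, ‖Q (θ n ω)‖ ≤ εn n ω + α₁ * h n * ‖θ n ω‖ + α₂ * h n * ‖θ n ω‖^2) :
    ∀ δ : ℝ, 0 < δ →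
      Filter.Tendsto (fun n => ℙ {ω | δ < ‖θ n ω‖}) Filter.atTop (nhds 0) := by
  intro δ hδ
  -- Q is injective
  have hinj : Function.Injective Q := by
    intro u v huv
    by_contra hne
    have h0 : Q (u - v) = 0 := by rw [map_sub, huv, sub_self]
    have := hneg (u - v) (sub_ne_zero.mpr hne)
    rw [h0, inner_zero_left] at this
    exact lt_irrefl 0 this
  have hsurj := LinearMap.injective_iff_surjective.mp hinj
  -- coercivity constant
  obtain ⟨C, hC0, hC⟩ : ∃ C, 0 < C ∧ ∀ v, ‖v‖ ≤ C * ‖Q v‖ := by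
    let e := LinearEquiv.ofBijective Q ⟨hinj, hsurj⟩
    let f := LinearMap.toContinuousLinearMap e.symm.toLinearMap
    refine ⟨max ‖f‖ 1, by positivity, fun v => ?_⟩
    have hv : ‖v‖ = ‖f (Q v)‖ := by
      have : f (Q v) = e.symm (e v) := rfl
      rw [this, e.symm_apply_apply]
    rw [hv]
    calc ‖f (Q v)‖ ≤ ‖f‖ * ‖Q v‖ := f.le_opNorm _
      _ ≤ max ‖f‖ 1 * ‖Q v‖ := by
          apply mul_le_mul_of_nonneg_right (le_max_left _ _) (norm_nonneg _)
  set δε : ℝ := δ / (2 * C) with hδεdef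
  have hδε : 0 < δε := by positivity
  set δh : ℝ := 1 / (4 * C * (|α₂| + 1)) with hδhdef
  have hδh : 0 < δh := by positivity
  set η : ℝ := 1 / (4 * C * (|α₁| + 1)) with hηdef
  have hη : 0 < η := by positivity
  -- eventually h n ≤ η
  have hev : ∀ᶠ n in Filter.atTop, h n ≤ η := by
    have := hh.eventually (eventually_le_nhds hη)
    simpa using this
  -- key inclusion
  have hincl : ∀ᶠ n in Filter.atTop,
      {ω | δ < ‖θ n ω‖} ⊆ {ω | δε < |εn n ω|} ∪ {ω | δh < h n * ‖θ n ω‖} := by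
    filter_upwards [hev] with n hn
    intro ω hω
    by_contra hcon
    simp only [Set.mem_union, Set.mem_setOf_eq, not_or, not_lt] at hcon
    obtain ⟨h1, h2⟩ := hcon
    simp only [Set.mem_setOf_eq] at hω
    set t := ‖θ n ω‖ with ht
    have ht0 : (0:ℝ) ≤ t := norm_nonneg _
    have hh0 : (0:ℝ) < h n := hpos n
    have key : t ≤ C * (|εn n ω| + |α₁| * h n * t + |α₂| * (h n * t) * t) := by
      calc t ≤ C * ‖Q (θ n ω)‖ := hC _
        _ ≤ C * (εn n ω + α₁ * h n * t + α₂ * h n * t^2) :=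
            mul_le_mul_of_nonneg_left (hbound n ω) hC0.le
        _ ≤ C * (|εn n ω| + |α₁| * h n * t + |α₂| * (h n * t) * t) := by
            apply mul_le_mul_of_nonneg_left _ hC0.le
            have e1 : εn n ω ≤ |εn n ω| := le_abs_self _
            have e2 : α₁ * h n * t ≤ |α₁| * h n * t := by
              apply mul_le_mul_of_nonneg_right _ ht0
              apply mul_le_mul_of_nonneg_right (le_abs_self _) hh0.le
            have e3 : α₂ * h n * t^2 ≤ |α₂| * (h n * t) * t := by
              have : |α₂| * (h n * t) * t = |α₂| * h n * t^2 := by ring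
              rw [this]
              apply mul_le_mul_of_nonneg_right _ (sq_nonneg t)
              apply mul_le_mul_of_nonneg_right (le_abs_self _) hh0.le
            linarith
    have b1 : C * |εn n ω| ≤ δ / 2 := by
      have : C * |εn n ω| ≤ C * δε := mul_le_mul_of_nonneg_left h1 hC0.le
      rw [hδεdef] at this
      calc C * |εn n ω| ≤ C * (δ / (2 * C)) := this
        _ = δ / 2 := by field_simp
    have b2 : C * (|α₁| * h n * t) ≤ t / 4 := by
      have hle : C * (|α₁| * h n) ≤ 1 / 4 := by
        have h1' : |α₁| * h n ≤ |α₁| * η := mul_le_mul_of_nonneg_left hn (abs_nonneg _)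
        have : C * (|α₁| * η) ≤ 1 / 4 := by
          rw [hηdef]
          have heq : C * (|α₁| * (1 / (4 * C * (|α₁| + 1)))) = |α₁| / (4 * (|α₁| + 1)) := by
            field_simp
          rw [heq, div_le_div_iff₀ (by positivity) (by norm_num)]
          nlinarith [abs_nonneg α₁]
        nlinarith
      calc C * (|α₁| * h n * t) = (C * (|α₁| * h n)) * t := by ring
        _ ≤ (1/4) * t := mul_le_mul_of_nonneg_right hle ht0
        _ = t / 4 := by ring
    have b3 : C * (|α₂| * (h n * t) * t) ≤ t / 4 := by
      have hle : C * (|α₂| * (h n * t)) ≤ 1 / 4 := by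
        have h2' : |α₂| * (h n * t) ≤ |α₂| * δh := mul_le_mul_of_nonneg_left h2 (abs_nonneg _)
        have : C * (|α₂| * δh) ≤ 1 / 4 := by
          rw [hδhdef]
          have heq : C * (|α₂| * (1 / (4 * C * (|α₂| + 1)))) = |α₂| / (4 * (|α₂| + 1)) := by
            field_simp
          rw [heq, div_le_div_iff₀ (by positivity) (by norm_num)]
          nlinarith [abs_nonneg α₂]
        nlinarith
      calc C * (|α₂| * (h n * t) * t) = (C * (|α₂| * (h n * t))) * t := by ring
        _ ≤ (1/4) * t := mul_le_mul_of_nonneg_right hle ht0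
        _ = t / 4 := by ring
    have : t ≤ δ / 2 + t / 4 + t / 4 := by nlinarith [key, b1, b2, b3]
    linarith
  -- squeeze
  have hupper : Filter.Tendsto
      (fun n => ℙ {ω | δε < |εn n ω|} + ℙ {ω | δh < h n * ‖θ n ω‖})
      Filter.atTop (nhds 0) := by
    have := (hεconv δε hδε).add (hθh δh hδh)
    simpa using this
  refine tendsto_of_tendsto_of_tendsto_of_le_of_le' tendsto_const_nhds hupper
    (Filter.Eventually.of_forall fun n => zero_le) ?_
  filter_upwards [hincl] with n hn
  calc ℙ {ω | δ < ‖θ n ω‖} ≤ ℙ ({ω | δε < |εn n ω|} ∪ {ω | δh < h n * ‖θ n ω‖}) :=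
        measure_mono hn
    _ ≤ _ := measure_union_le _ _
end
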